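/- Let s : ℂ → M₂(ℂ) be given by s(z) = (1 + |z|²)^{−1/2}·[[1, −conj(z)], [z, 1]] (a local section of the Hopf bundle, taking values in SU(2)). Then for every z ∈ ℂ and every v ∈ ℂ (regarded as a real tangent direction), the ℝ-Fréchet derivative satisfies s(z)⁻¹·(Ds)(z)[v] = (1/(1 + |z|²)) · [[ (conj(z)·v − z·conj(v))/2 , −conj(v) ], [ v , (z·conj(v) − conj(z)·v)/2 ]]. Equivalently, s⁻¹ds = −Γ t₃ + (i/(2λ)) e t₋ − (i/(2λ)) ē t₊, where Γ(v) = i(z·conj(v) − conj(z)·v)/(1+|z|²) is the spin connection 1-form and e(v) = 2λv/(1+|z|²) the frame of the round 2-sphere of radius λ, with t₃ = −(i/2)τ₃ and t± = −(i/2)(τ₁ ± iτ₂). -/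

import Mathlib

open Matrix Complex

noncomputable section

attribute [local instance] Matrix.normedAddCommGroup Matrix.normedSpace

/-- The Pauli matrices τ₁, τ₂, τ₃. -/
def pauli : Fin 3 → Matrix (Fin 2) (Fin 2) ℂ :=
  ![!![0, 1; 1, 0], !![0, -I; I, 0], !![1, 0; 0, -1]]

/-- The local section s(z) = (1 + |z|²)^{−1/2}·[[1, −conj z],[z, 1]] of the Hopf bundle. -/
def smap (z : ℂ) : Matrix (Fin 2) (Fin 2) ℂ :=
  (((Real.sqrt (1 + Complex.normSq z))⁻¹ : ℝ) : ℂ) •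
    !![1, -(starRingEnd ℂ) z; z, 1]

/-- The ℝ-linear map w ↦ [[0, −conj w],[w, 0]]. -/
def matA : ℂ →ₗ[ℝ] Matrix (Fin 2) (Fin 2) ℂ where
  toFun w := !![0, -(starRingEnd ℂ) w; w, 0]
  map_add' a b := by
    ext i j
    fin_cases i <;> fin_cases j <;> simp [Matrix.add_apply, map_add] <;> try ring
  map_smul' r a := by
    ext i j
    fin_cases i <;> fin_cases j <;>
      simp [Matrix.smul_apply, Complex.real_smul, _root_.map_mul]

theorem smap_hasFDerivAt (z : ℂ) :
    HasFDerivAt smap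
      ((((Real.sqrt (1 + Complex.normSq z))⁻¹ : ℝ) : ℂ) • matA.toContinuousLinearMap +
        (Complex.ofRealCLM.comp
          ((-((Real.sqrt (1 + Complex.normSq z)) ^ 2)⁻¹) •
            ((1 / (2 * Real.sqrt (1 + Complex.normSq z))) •
              ((2*z.re) • Complex.reCLM + (2*z.im) • Complex.imCLM)))).smulRight
          !![1, -(starRingEnd ℂ) z; z, 1]) z := by
  have hr : (0:ℝ) < 1 + Complex.normSq z := by have := Complex.normSq_nonneg z; linarith
  have hn : HasFDerivAt (fun w : ℂ => 1 + Complex.normSq w)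
      ((2*z.re) • Complex.reCLM + (2*z.im) • Complex.imCLM) z := by
    have h : (fun w : ℂ => 1 + Complex.normSq w)
        = fun w : ℂ => 1 + (w.re * w.re + w.im * w.im) := by
      funext w; simp [Complex.normSq_apply]
    rw [h]
    have hre : HasFDerivAt (fun w : ℂ => w.re) Complex.reCLM z := Complex.reCLM.hasFDerivAt
    have him : HasFDerivAt (fun w : ℂ => w.im) Complex.imCLM z := Complex.imCLM.hasFDerivAt
    have := (hasFDerivAt_const (1:ℝ) z).add ((hre.mul hre).add (him.mul him))
    refine this.congr_fderiv ?_
    ext w; simp; ring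
  have hsq := hn.sqrt hr.ne'
  have hg := (hasDerivAt_inv (Real.sqrt_ne_zero'.2 hr)).comp_hasFDerivAt z hsq
  have hc := Complex.ofRealCLM.hasFDerivAt.comp z hg
  have hM : HasFDerivAt (fun w : ℂ => !![1, -(starRingEnd ℂ) w; w, 1])
      (matA.toContinuousLinearMap) z := by
    have h : (fun w : ℂ => !![1, -(starRingEnd ℂ) w; w, 1])
        = fun w : ℂ => !![(1:ℂ), 0; 0, 1] + matA.toContinuousLinearMap w := by
      funext w; ext i j
      fin_cases i <;> fin_cases j <;>
        simp [matA, LinearMap.coe_toContinuousLinearMap', Matrix.add_apply]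
    rw [h]
    exact ((hasFDerivAt_const (!![(1:ℂ), 0; 0, 1]) z).add
      matA.toContinuousLinearMap.hasFDerivAt).congr_fderiv (zero_add _)
  have := hc.smul hM
  exact this

theorem fderiv_smap_apply (z v : ℂ) :
    fderiv ℝ smap z v =
      (((Real.sqrt (1 + Complex.normSq z))⁻¹ : ℝ) : ℂ) • !![0, -(starRingEnd ℂ) v; v, 0] +
        ((-(z.re * v.re + z.im * v.im) /
            ((1 + Complex.normSq z) * Real.sqrt (1 + Complex.normSq z)) : ℝ) : ℂ) •
          !![1, -(starRingEnd ℂ) z; z, 1] := by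
  have hr : (0:ℝ) < 1 + Complex.normSq z := by have := Complex.normSq_nonneg z; linarith
  rw [(smap_hasFDerivAt z).fderiv]
  have h2 : ((Real.sqrt (1 + Complex.normSq z) : ℝ) : ℂ) ^ 2 = 1 + (Complex.normSq z : ℂ) := by
    rw [← Complex.ofReal_pow, Real.sq_sqrt hr.le]; push_cast; ring
  have h1 : ((Real.sqrt (1 + Complex.normSq z) : ℝ) : ℂ) ≠ 0 :=
    Complex.ofReal_ne_zero.2 (Real.sqrt_ne_zero'.2 hr)
  ext i j
  fin_cases i <;> fin_cases j <;>
    · simp [matA, LinearMap.coe_toContinuousLinearMap', Matrix.add_apply, Matrix.smul_apply]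
      rw [← h2]
      field_simp
      all_goals first
        | ring1
        | exact Or.inl (by ring)

theorem smap_maurer_cartan_aux (z v : ℂ) :
    (smap z)⁻¹ * fderiv ℝ smap z v =
        (((1 + Complex.normSq z : ℝ) : ℂ))⁻¹ •
          !![((starRingEnd ℂ) z * v - z * (starRingEnd ℂ) v) / 2, -(starRingEnd ℂ) v;
            v, (z * (starRingEnd ℂ) v - (starRingEnd ℂ) z * v) / 2] := by
  have hr : (0:ℝ) < 1 + Complex.normSq z := by have := Complex.normSq_nonneg z; linarith
  have hdet : (smap z).det = 1 := by
    simp [smap, Matrix.det_fin_two_of, Matrix.smul_apply]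
    have hzz : (starRingEnd ℂ) z * z = ((Complex.normSq z : ℝ) : ℂ) := by
      rw [mul_comm, Complex.mul_conj]
    have hC : ((Real.sqrt (1 + Complex.normSq z) : ℝ) : ℂ) ^ 2
        = 1 + ((Complex.normSq z : ℝ) : ℂ) := by
      rw [← Complex.ofReal_pow, Real.sq_sqrt hr.le]; push_cast; ring
    have hsC : ((Real.sqrt (1 + Complex.normSq z) : ℝ) : ℂ) ≠ 0 :=
      Complex.ofReal_ne_zero.2 (Real.sqrt_ne_zero'.2 hr)
    field_simp
    linear_combination hzz - hC
  haveI := (smap z).invertibleOfIsUnitDet (hdet ▸ isUnit_one)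
  rw [Matrix.inv_mul_eq_iff_eq_mul_of_invertible, fderiv_smap_apply]
  unfold smap
  set s := Real.sqrt (1 + Complex.normSq z) with hs
  have hs0 : 0 < s := Real.sqrt_pos.2 hr
  have hsC : (s : ℂ) ≠ 0 := Complex.ofReal_ne_zero.2 hs0.ne'
  have hrC : ((1 : ℂ) + (Complex.normSq z : ℂ)) ≠ 0 := by
    have : ((1 + Complex.normSq z : ℝ) : ℂ) ≠ 0 := Complex.ofReal_ne_zero.2 hr.ne'
    push_cast at this; exact this
  ext i j
  fin_cases i <;> fin_cases j <;>
    · simp [Matrix.mul_apply, Fin.sum_univ_two, Matrix.smul_apply, Matrix.add_apply]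
      push_cast
      field_simp [hsC, hrC]
      simp [Complex.ext_iff, pow_succ, pow_zero, one_mul, Complex.mul_re, Complex.mul_im,
        Complex.normSq_apply]
      all_goals constructor <;> first | ring1 | exact Or.inl (by ring)

set_option maxHeartbeats 1600000 in
/-- the Maurer–Cartan form of the Hopf section,
s⁻¹ds = (1/(1+|z|²))·[[(z̄v − zv̄)/2, −v̄],[v, (zv̄ − z̄v)/2]]; equivalently
s⁻¹ds = −Γ t₃ + (i/(2λ)) e t₋ − (i/(2λ)) ē t₊ with Γ(v) = i(zv̄ − z̄v)/(1+|z|²),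
e(v) = 2λv/(1+|z|²), t₃ = −(i/2)τ₃, t± = −(i/2)(τ₁ ± iτ₂). -/
theorem smap_maurer_cartan (z v : ℂ) :
    (smap z)⁻¹ * fderiv ℝ smap z v =
        (((1 + Complex.normSq z : ℝ) : ℂ))⁻¹ •
          !![((starRingEnd ℂ) z * v - z * (starRingEnd ℂ) v) / 2, -(starRingEnd ℂ) v;
            v, (z * (starRingEnd ℂ) v - (starRingEnd ℂ) z * v) / 2] ∧
      ∀ lam : ℝ, 0 < lam →
        (smap z)⁻¹ * fderiv ℝ smap z v =
          (-(I * (z * (starRingEnd ℂ) v - (starRingEnd ℂ) z * v) /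
                ((1 + Complex.normSq z : ℝ) : ℂ))) • (-(I / 2) • pauli 2) +
            ((I / (2 * (lam : ℂ))) * (2 * (lam : ℂ) * v / ((1 + Complex.normSq z : ℝ) : ℂ))) •
              (-(I / 2) • (pauli 0 - I • pauli 1)) -
              ((I / (2 * (lam : ℂ))) *
                  (2 * (lam : ℂ) * (starRingEnd ℂ) v / ((1 + Complex.normSq z : ℝ) : ℂ))) •
                (-(I / 2) • (pauli 0 + I • pauli 1)) := by
  have hr : (0:ℝ) < 1 + Complex.normSq z := by have := Complex.normSq_nonneg z; linarith
  have hrC : ((1 + Complex.normSq z : ℝ) : ℂ) ≠ 0 := Complex.ofReal_ne_zero.2 hr.ne'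
  refine ⟨smap_maurer_cartan_aux z v, fun lam hlam => ?_⟩
  rw [smap_maurer_cartan_aux z v]
  have hlamC : (lam : ℂ) ≠ 0 := Complex.ofReal_ne_zero.2 hlam.ne'
  have e1 : (I / (2 * (lam : ℂ))) * (2 * (lam : ℂ) * v / ((1 + Complex.normSq z : ℝ) : ℂ))
      = I * v / ((1 + Complex.normSq z : ℝ) : ℂ) := by
    have h2l : (2 * (lam:ℂ)) ≠ 0 := mul_ne_zero two_ne_zero hlamC
    field_simp
  have e2 : (I / (2 * (lam : ℂ))) *
        (2 * (lam : ℂ) * (starRingEnd ℂ) v / ((1 + Complex.normSq z : ℝ) : ℂ))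
      = I * (starRingEnd ℂ) v / ((1 + Complex.normSq z : ℝ) : ℂ) := by
    have h2l : (2 * (lam:ℂ)) ≠ 0 := mul_ne_zero two_ne_zero hlamC
    field_simp
  rw [e1, e2]
  ext i j
  fin_cases i <;> fin_cases j <;>
    · simp [pauli, Matrix.smul_apply, Matrix.add_apply, Matrix.sub_apply]
      field_simp [hrC]
      all_goals try ring_nf
      all_goals try simp [Complex.I_sq]
      all_goals try ring1
      all_goals try (rw [show ((2:ℂ) + ↑(Complex.normSq z) * 2)
          = 2 * (1 + ↑(Complex.normSq z)) from by ring, mul_inv]; ring1)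
      all_goals try (rw [mul_comm ((starRingEnd ℂ) v) (2:ℂ),
        mul_div_mul_left _ _ (two_ne_zero (α := ℂ))])
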